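/- A circle not passing through the center of inversion is inverted into a circle not passing through the center: let O be a point of the Euclidean plane, r > 0, and let Γ be the circle with center Q and radius s > 0, with O ∉ Γ. Then there exist a point Q' and s' > 0 with O not on the circle of center Q' and radius s', such that the image of Γ under the inversion with center O and radius r is exactly the circle with center Q' and radius s'. -/

import Mathlib

open EuclideanGeometry

lemma inv_key {E : Type*} [NormedAddCommGroup E] [InnerProductSpace ℝ E]
    (O Q P : E) (r s : ℝ) (hr : r ≠ 0) (hs : 0 ≤ s) (hd : dist Q O ≠ s)
    (hP : dist Q P = s) :
    dist (O + (r ^ 2 / (dist Q O ^ 2 - s ^ 2)) • (Q - O)) (inversion O r P)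
      = r ^ 2 * s / |dist Q O ^ 2 - s ^ 2| := by
  have hPO : P ≠ O := by rintro rfl; exact hd hP
  have hn : dist P O ≠ 0 := dist_ne_zero.2 hPO
  have hD : dist Q O ^ 2 - s ^ 2 ≠ 0 := by
    intro h
    apply hd
    nlinarith [dist_nonneg (x := Q) (y := O)]
  rw [inversion, vsub_eq_sub, vadd_eq_add]
  have hip : inner ℝ (Q - O) (P - O) = (dist Q O ^ 2 + dist P O ^ 2 - s ^ 2) / 2 := by
    have h1 : ‖(Q - O) - (P - O)‖ ^ 2 = s ^ 2 := by
      rw [sub_sub_sub_cancel_right, ← dist_eq_norm, hP]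
    rw [@norm_sub_sq_real, ← dist_eq_norm, ← dist_eq_norm] at h1
    linarith
  have hvec : (O + (r ^ 2 / (dist Q O ^ 2 - s ^ 2)) • (Q - O)) - ((r / dist P O) ^ 2 • (P - O) + O)
      = (r ^ 2 / (dist Q O ^ 2 - s ^ 2)) • (Q - O) - (r / dist P O) ^ 2 • (P - O) := by
    abel
  rw [dist_eq_norm, hvec]
  have hsq : ‖(r ^ 2 / (dist Q O ^ 2 - s ^ 2)) • (Q - O) - (r / dist P O) ^ 2 • (P - O)‖ ^ 2
      = (r ^ 2 * s / |dist Q O ^ 2 - s ^ 2|) ^ 2 := by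
    rw [@norm_sub_sq_real, real_inner_smul_left, real_inner_smul_right, hip,
      norm_smul, norm_smul, ← dist_eq_norm, ← dist_eq_norm]
    simp only [Real.norm_eq_abs, div_pow, mul_pow, sq_abs]
    field_simp
    ring
  have h2 : (0:ℝ) ≤ r ^ 2 * s / |dist Q O ^ 2 - s ^ 2| := by positivity
  nlinarith [norm_nonneg ((r ^ 2 / (dist Q O ^ 2 - s ^ 2)) • (Q - O) - (r / dist P O) ^ 2 • (P - O))]

theorem inversion_circle_to_circle (O Q : EuclideanSpace ℝ (Fin 2)) (r s : ℝ)
    (hr : 0 < r) (hs : 0 < s) (hO : dist Q O ≠ s) :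
    ∃ (Q' : EuclideanSpace ℝ (Fin 2)) (s' : ℝ), 0 < s' ∧ dist Q' O ≠ s' ∧
      inversion O r '' {P | dist Q P = s} = {P | dist Q' P = s'} := by
  have hr' : r ≠ 0 := hr.ne'
  have hD : dist Q O ^ 2 - s ^ 2 ≠ 0 := by
    intro h
    apply hO
    nlinarith [dist_nonneg (x := Q) (y := O)]
  have habs : (0:ℝ) < |dist Q O ^ 2 - s ^ 2| := abs_pos.2 hD
  set Q' : EuclideanSpace ℝ (Fin 2) := O + (r ^ 2 / (dist Q O ^ 2 - s ^ 2)) • (Q - O) with hQ'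
  set s' : ℝ := r ^ 2 * s / |dist Q O ^ 2 - s ^ 2| with hs'
  have hs'pos : 0 < s' := by positivity
  have hdQ' : dist Q' O = r ^ 2 * dist Q O / |dist Q O ^ 2 - s ^ 2| := by
    rw [hQ', dist_eq_norm, add_sub_cancel_left, norm_smul, Real.norm_eq_abs, abs_div,
      abs_of_pos (by positivity : (0:ℝ) < r ^ 2), ← dist_eq_norm]
    ring
  have hO' : dist Q' O ≠ s' := by
    rw [hdQ', hs']
    intro h
    rw [div_eq_div_iff habs.ne' habs.ne'] at h
    apply hO
    have h2 := mul_right_cancel₀ habs.ne' h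
    exact mul_left_cancel₀ (pow_ne_zero 2 hr') h2
  refine ⟨Q', s', hs'pos, hO', ?_⟩
  ext P'
  simp only [Set.mem_image, Set.mem_setOf_eq]
  constructor
  · rintro ⟨P, hP, rfl⟩
    exact inv_key O Q P r s hr' hs.le hO hP
  · intro hP'
    refine ⟨inversion O r P', ?_, inversion_inversion O hr' P'⟩
    have hDs : dist Q' O ^ 2 - s' ^ 2 = r ^ 4 / (dist Q O ^ 2 - s ^ 2) := by
      rw [hdQ', hs']
      rw [div_pow, div_pow, sq_abs]
      field_simp
    have key := inv_key O Q' P' r s' hr' hs'pos.le hO' hP'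
    rw [hDs] at key
    have hc : r ^ 2 / (r ^ 4 / (dist Q O ^ 2 - s ^ 2)) * (r ^ 2 / (dist Q O ^ 2 - s ^ 2)) = 1 := by
      field_simp
    have hcen : O + (r ^ 2 / (r ^ 4 / (dist Q O ^ 2 - s ^ 2))) • (Q' - O) = Q := by
      rw [hQ', add_sub_cancel_left, smul_smul, hc, one_smul, add_sub_cancel]
    have hrad : r ^ 2 * s' / |r ^ 4 / (dist Q O ^ 2 - s ^ 2)| = s := by
      rw [hs', abs_div, abs_of_pos (by positivity : (0:ℝ) < r ^ 4)]
      field_simp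
    rw [hcen, hrad] at key
    exact key
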